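/- Second localization lemma: Let λ_X and λ_Y be measures on measurable spaces X and Y such that the product measure λ_Z := λ_X ⊗ λ_Y on Z := X × Y is a probability measure. Let (X_i)_{i ∈ I} be a finite measurable partition of X with λ_X(X_i) > 0 for all i, and (Y_j)_{j ∈ J} a finite measurable partition of Y with λ_Y(Y_j) > 0 for all j; set Z_{i,j} := X_i × Y_j. Let h : Z → ℝ be measurable and σ > 0. Then ((λ_Z ⊗ λ_Z){((x,y),(x',y')) ∈ Z × Z : |h(x,y) − h(x',y) − h(x,y') + h(x',y')| ≤ σ})⁴ ≤ Σ_{(i,j) ∈ I × J} (1 / λ_Z(Z_{i,j})) · (λ_Z ⊗ λ_Z){((x,y),(x',y')) ∈ Z_{i,j} × Z_{i,j} : |h(x,y) − h(x',y) − h(x,y') + h(x',y')| ≤ 4σ}. -/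

import Mathlib

open MeasureTheory Function
open scoped ENNReal

/-- Cauchy–Schwarz inequality for the Lebesgue integral. -/
lemma csLem {α : Type*} [MeasurableSpace α] (m : Measure α) (f g : α → ℝ≥0∞)
    (hf : AEMeasurable f m) (hg : AEMeasurable g m) :
    (∫⁻ a, f a * g a ∂m) ^ 2 ≤ (∫⁻ a, f a ^ 2 ∂m) * (∫⁻ a, g a ^ 2 ∂m) := by
  have hpq : Real.HolderConjugate 2 2 := Real.HolderConjugate.two_two
  have H := ENNReal.lintegral_mul_le_Lp_mul_Lq m hpq hf hg
  calc (∫⁻ a, f a * g a ∂m) ^ 2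
      ≤ ((∫⁻ a, f a ^ (2:ℝ) ∂m) ^ (1/(2:ℝ)) * (∫⁻ a, g a ^ (2:ℝ) ∂m) ^ (1/(2:ℝ))) ^ 2 := by
        gcongr; exact H
    _ = (∫⁻ a, f a ^ 2 ∂m) * (∫⁻ a, g a ^ 2 ∂m) := by
        rw [mul_pow, ← ENNReal.rpow_natCast (_ ^ (1/(2:ℝ))) 2,
          ← ENNReal.rpow_natCast (_ ^ (1/(2:ℝ))) 2, ← ENNReal.rpow_mul, ← ENNReal.rpow_mul]
        norm_num

/-- Jensen's inequality for the fourth power, probability measure. -/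
lemma pow4Lem {α : Type*} [MeasurableSpace α] (m : Measure α) [IsProbabilityMeasure m]
    (f : α → ℝ≥0∞) (hf : AEMeasurable f m) :
    (∫⁻ a, f a ∂m) ^ 4 ≤ ∫⁻ a, f a ^ 4 ∂m := by
  have key : ∀ g : α → ℝ≥0∞, AEMeasurable g m → (∫⁻ a, g a ∂m) ^ 2 ≤ ∫⁻ a, g a ^ 2 ∂m := by
    intro g hg
    have := csLem m (fun _ => 1) g aemeasurable_const hg
    simpa [lintegral_const] using this
  calc (∫⁻ a, f a ∂m) ^ 4 = ((∫⁻ a, f a ∂m) ^ 2) ^ 2 := by ring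
    _ ≤ (∫⁻ a, f a ^ 2 ∂m) ^ 2 := by gcongr; exact key f hf
    _ ≤ ∫⁻ a, (f a ^ 2) ^ 2 ∂m := key _ (hf.pow_const 2)
    _ = ∫⁻ a, f a ^ 4 ∂m := by simp_rw [← pow_mul]

/-- Cauchy–Schwarz with a support condition. -/
lemma csSuppLem {α : Type*} [MeasurableSpace α] (m : Measure α) (s : Set α)
    (hs : MeasurableSet s) (f : α → ℝ≥0∞) (hf : AEMeasurable f m)
    (hsupp : ∀ a, a ∉ s → f a = 0) :
    (∫⁻ a, f a ∂m) ^ 2 ≤ m s * ∫⁻ a, f a ^ 2 ∂m := by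
  have h1 : ∀ a, s.indicator (fun _ => (1:ℝ≥0∞)) a * f a = f a := by
    intro a
    by_cases ha : a ∈ s
    · simp [Set.indicator_of_mem ha]
    · simp [Set.indicator_of_notMem ha, hsupp a ha]
  have := csLem m (s.indicator fun _ => 1) f
    (measurable_const.indicator hs).aemeasurable hf
  simp_rw [h1] at this
  refine this.trans ?_
  gcongr
  have h2 : ∀ a, s.indicator (fun _ => (1:ℝ≥0∞)) a ^ 2 = s.indicator (fun _ => 1) a := by
    intro a; by_cases ha : a ∈ s <;> simp [ha]
  simp_rw [h2]
  rw [lintegral_indicator hs]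
  simp

/-- Discrete Jensen inequality for the fourth power. -/
lemma jensenSum {ι : Type*} [Fintype ι] (w t : ι → ℝ≥0∞) (hw : ∑ k, w k = 1) :
    (∑ k, w k * t k) ^ 4 ≤ ∑ k, w k * t k ^ 4 := by
  letI : MeasurableSpace ι := ⊤
  haveI : MeasurableSingletonClass ι := ⟨fun _ => trivial⟩
  set κ : Measure ι := Measure.sum (fun k => w k • Measure.dirac k) with hκ
  have hint : ∀ u : ι → ℝ≥0∞, ∫⁻ k, u k ∂κ = ∑ k, w k * u k := by
    intro u
    rw [hκ, lintegral_sum_measure, tsum_fintype]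
    congr 1
    ext k
    rw [lintegral_smul_measure, lintegral_dirac, smul_eq_mul]
  haveI : IsProbabilityMeasure κ := by
    constructor
    have := hint (fun _ => 1)
    simpa [hw] using this
  have := pow4Lem κ t (measurable_from_top (f := t)).aemeasurable
  rwa [hint t, hint (fun k => t k ^ 4)] at this

/-- If a (possibly non s-finite) product is a probability measure, the factors have
total mass multiplying to one. -/
lemma massLem {X Y : Type*} [MeasurableSpace X] [MeasurableSpace Y]
    (μ : Measure X) (ν : Measure Y) [IsProbabilityMeasure (μ.prod ν)] :
    μ Set.univ * ν Set.univ = 1 := by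
  by_cases hker : AEMeasurable (fun x => Measure.map (Prod.mk x) ν) μ
  · have h1 : (μ.prod ν) Set.univ = ∫⁻ x, (Measure.map (Prod.mk x) ν) Set.univ ∂μ := by
      rw [Measure.prod_def, Measure.bind, Measure.join_apply MeasurableSet.univ,
        lintegral_map' (Measure.measurable_coe MeasurableSet.univ).aemeasurable hker]
    have h2 : ∀ x : X, (Measure.map (Prod.mk x) ν) Set.univ = ν Set.univ := by
      intro x; rw [Measure.map_apply measurable_prodMk_left MeasurableSet.univ]; simp
    simp_rw [h2, lintegral_const] at h1
    rw [measure_univ] at h1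
    rw [mul_comm]; exact h1.symm
  · exfalso
    have h0 : μ.prod ν = 0 := by
      rw [Measure.prod_def, Measure.bind]
      rw [Measure.map_of_not_aemeasurable hker, Measure.join_zero]
    have h1 : (μ.prod ν) Set.univ = 1 := measure_univ
    rw [h0] at h1
    simp at h1

lemma finLem {X Y : Type*} [MeasurableSpace X] [MeasurableSpace Y]
    (μ : Measure X) (ν : Measure Y) [IsProbabilityMeasure (μ.prod ν)] :
    IsFiniteMeasure μ ∧ IsFiniteMeasure ν := by
  have hm := massLem μ ν
  constructor <;> constructor
  · rcases eq_or_ne (μ Set.univ) ∞ with hμ | hμ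
    · exfalso
      rw [hμ] at hm
      rcases eq_or_ne (ν Set.univ) 0 with hν | hν
      · rw [hν, mul_zero] at hm; simp at hm
      · rw [ENNReal.top_mul hν] at hm; simp at hm
    · exact hμ.lt_top
  · rcases eq_or_ne (ν Set.univ) ∞ with hν | hν
    · exfalso
      rw [hν] at hm
      rcases eq_or_ne (μ Set.univ) 0 with hμ | hμ
      · rw [hμ, zero_mul] at hm; simp at hm
      · rw [ENNReal.mul_top hμ] at hm; simp at hm
    · exact hν.lt_top

lemma measAux {X Y γ : Type*} [MeasurableSpace X] [MeasurableSpace Y] [MeasurableSpace γ]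
    {φ : X → Y → ℝ≥0∞} (hφ : Measurable (uncurry φ)) {e1 : γ → X} {e2 : γ → Y}
    (h1 : Measurable e1) (h2 : Measurable e2) : Measurable fun q => φ (e1 q) (e2 q) :=
  hφ.comp (h1.prodMk h2)

/-- Box Cauchy–Schwarz inequality. -/
lemma boxLem {X Y : Type*} [MeasurableSpace X] [MeasurableSpace Y]
    (μ : Measure X) (ν : Measure Y) [IsFiniteMeasure μ] [IsFiniteMeasure ν]
    (sA : Set X) (sB : Set Y) (hsA : MeasurableSet sA) (hsB : MeasurableSet sB)
    (φ : X → Y → ℝ≥0∞) (hφ : Measurable (uncurry φ))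
    (hsuppA : ∀ x y, x ∉ sA → φ x y = 0) (hsuppB : ∀ x y, y ∉ sB → φ x y = 0) :
    (∫⁻ z, φ z.1 z.2 ∂μ.prod ν) ^ 4 ≤
      (μ sA * ν sB) ^ 2 * ∫⁻ p, (∫⁻ y, φ p.1 y * φ p.2 y ∂ν) ^ 2 ∂μ.prod μ := by
  set H : Y → ℝ≥0∞ := fun y => ∫⁻ x, φ x y ∂μ with hHdef
  have hHmeas : Measurable H := hφ.lintegral_prod_left
  set G2 : X × X → ℝ≥0∞ := fun p => ∫⁻ y, φ p.1 y * φ p.2 y ∂ν with hG2def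
  have hG2meas : Measurable G2 := by
    have hm : Measurable fun q : (X × X) × Y => φ q.1.1 q.2 * φ q.1.2 q.2 :=
      (measAux hφ (by fun_prop) (by fun_prop)).mul (measAux hφ (by fun_prop) (by fun_prop))
    exact hm.lintegral_prod_right'
  have hS : (∫⁻ z, φ z.1 z.2 ∂μ.prod ν) = ∫⁻ y, H y ∂ν := by
    rw [lintegral_prod_symm _
      (by exact (hφ.comp (measurable_fst.prodMk measurable_snd)).aemeasurable)]
  have hCS1 : (∫⁻ y, H y ∂ν) ^ 2 ≤ ν sB * ∫⁻ y, H y ^ 2 ∂ν := by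
    apply csSuppLem ν sB hsB H hHmeas.aemeasurable
    intro y hy
    simp only [hHdef]
    rw [← lintegral_zero (μ := μ)]
    exact lintegral_congr fun x => hsuppB x y hy
  have hH2 : (∫⁻ y, H y ^ 2 ∂ν) = ∫⁻ p, G2 p ∂μ.prod μ := by
    have hsq : ∀ y, H y ^ 2 = ∫⁻ p, φ p.1 y * φ p.2 y ∂μ.prod μ := by
      intro y
      rw [sq, ← lintegral_prod_mul
        (by exact (hφ.comp (measurable_id.prodMk measurable_const)).aemeasurable)
        (by exact (hφ.comp (measurable_id.prodMk measurable_const)).aemeasurable)]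
    simp_rw [hsq]
    rw [lintegral_lintegral_swap]
    exact ((hφ.comp ((measurable_fst.comp measurable_snd).prodMk measurable_fst)).mul
      (hφ.comp ((measurable_snd.comp measurable_snd).prodMk measurable_fst))).aemeasurable
  have hCS2 : (∫⁻ p, G2 p ∂μ.prod μ) ^ 2 ≤ μ sA * μ sA * ∫⁻ p, G2 p ^ 2 ∂μ.prod μ := by
    have := csSuppLem (μ.prod μ) (sA ×ˢ sA) (hsA.prod hsA) G2 hG2meas.aemeasurable ?_
    · rwa [Measure.prod_prod] at this
    · intro p hp
      simp only [hG2def]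
      rw [← lintegral_zero (μ := ν)]
      apply lintegral_congr fun y => ?_
      have hp' : ¬(p.1 ∈ sA ∧ p.2 ∈ sA) := fun hc => hp (Set.mem_prod.mpr hc)
      rcases not_and_or.mp hp' with h1 | h2
      · rw [hsuppA p.1 y h1, zero_mul]
      · rw [hsuppA p.2 y h2, mul_zero]
  calc (∫⁻ z, φ z.1 z.2 ∂μ.prod ν) ^ 4
      = ((∫⁻ y, H y ∂ν) ^ 2) ^ 2 := by rw [hS]; ring
    _ ≤ (ν sB * ∫⁻ y, H y ^ 2 ∂ν) ^ 2 := by gcongr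
    _ = ν sB ^ 2 * (∫⁻ p, G2 p ∂μ.prod μ) ^ 2 := by rw [hH2]; ring
    _ ≤ ν sB ^ 2 * (μ sA * μ sA * ∫⁻ p, G2 p ^ 2 ∂μ.prod μ) := by gcongr
    _ = (μ sA * ν sB) ^ 2 * ∫⁻ p, G2 p ^ 2 ∂μ.prod μ := by ring

/-- Fubini-type rearrangement of the four-point integral. -/
lemma rearrangeLem {X Y : Type*} [MeasurableSpace X] [MeasurableSpace Y]
    (μ : Measure X) (ν : Measure Y) [IsFiniteMeasure μ] [IsFiniteMeasure ν]
    (φ : X → Y → ℝ≥0∞) (hφ : Measurable (uncurry φ)) :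
    ∫⁻ (w : (X × Y) × (X × Y)), φ w.1.1 w.1.2 * φ w.2.1 w.1.2 * φ w.1.1 w.2.2 * φ w.2.1 w.2.2
        ∂((μ.prod ν).prod (μ.prod ν))
      = ∫⁻ p, (∫⁻ y, φ p.1 y * φ p.2 y ∂ν) ^ 2 ∂μ.prod μ := by
  set G2 : X → X → ℝ≥0∞ := fun x x' => ∫⁻ y, φ x y * φ x' y ∂ν with hG2
  have hG2m : Measurable fun p : X × X => G2 p.1 p.2 := by
    have hm : Measurable fun q : (X × X) × Y => φ q.1.1 q.2 * φ q.1.2 q.2 :=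
      (measAux hφ (by fun_prop) (by fun_prop)).mul (measAux hφ (by fun_prop) (by fun_prop))
    exact hm.lintegral_prod_right'
  have hbig : Measurable fun w : (X × Y) × (X × Y) =>
      φ w.1.1 w.1.2 * φ w.2.1 w.1.2 * φ w.1.1 w.2.2 * φ w.2.1 w.2.2 :=
    (((measAux hφ (by fun_prop) (by fun_prop)).mul (measAux hφ (by fun_prop) (by fun_prop))).mul
      (measAux hφ (by fun_prop) (by fun_prop))).mul (measAux hφ (by fun_prop) (by fun_prop))
  have hmid : ∀ z : X × Y, Measurable fun q : X × Y =>
      φ z.1 z.2 * φ q.1 z.2 * φ z.1 q.2 * φ q.1 q.2 := fun z =>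
    (((measurable_const.mul (measAux hφ (by fun_prop) (by fun_prop))).mul
      (measAux hφ (by fun_prop) (by fun_prop))).mul (measAux hφ (by fun_prop) (by fun_prop)))
  have hinner2 : ∀ z : X × X, Measurable fun y' : Y => φ z.1 y' * φ z.2 y' :=
    fun z => (measAux hφ (by fun_prop) (by fun_prop)).mul (measAux hφ (by fun_prop) (by fun_prop))
  have hW : Measurable fun q : (X × Y) × X => (φ q.1.1 q.1.2 * φ q.2 q.1.2) * G2 q.1.1 q.2 :=
    ((measAux hφ (by fun_prop) (by fun_prop)).mul (measAux hφ (by fun_prop) (by fun_prop))).mul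
      (hG2m.comp ((measurable_fst.comp measurable_fst).prodMk measurable_snd))
  calc ∫⁻ (w : (X × Y) × (X × Y)), φ w.1.1 w.1.2 * φ w.2.1 w.1.2 * φ w.1.1 w.2.2 * φ w.2.1 w.2.2
        ∂((μ.prod ν).prod (μ.prod ν))
      = ∫⁻ z, (∫⁻ z', φ z.1 z.2 * φ z'.1 z.2 * φ z.1 z'.2 * φ z'.1 z'.2 ∂(μ.prod ν))
          ∂(μ.prod ν) := lintegral_prod _ hbig.aemeasurable
    _ = ∫⁻ z, (∫⁻ x', (∫⁻ y', φ z.1 z.2 * φ x' z.2 * φ z.1 y' * φ x' y' ∂ν) ∂μ)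
          ∂(μ.prod ν) := by
        refine lintegral_congr fun z => ?_
        exact lintegral_prod _ (hmid z).aemeasurable
    _ = ∫⁻ z, (∫⁻ x', (φ z.1 z.2 * φ x' z.2) * G2 z.1 x' ∂μ) ∂(μ.prod ν) := by
        refine lintegral_congr fun z => lintegral_congr fun x' => ?_
        rw [hG2, ← lintegral_const_mul _ (hinner2 (z.1, x'))]
        exact lintegral_congr fun y' => by ring
    _ = ∫⁻ y, (∫⁻ x, (∫⁻ x', (φ x y * φ x' y) * G2 x x' ∂μ) ∂μ) ∂ν := by
        exact lintegral_prod_symm _ hW.lintegral_prod_right'.aemeasurable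
    _ = ∫⁻ y, (∫⁻ p, (φ p.1 y * φ p.2 y) * G2 p.1 p.2 ∂(μ.prod μ)) ∂ν := by
        refine lintegral_congr fun y => ?_
        refine (lintegral_prod (μ := μ) (ν := μ)
          (fun p => φ p.1 y * φ p.2 y * G2 p.1 p.2) ?_).symm
        exact (((measAux hφ measurable_fst measurable_const).mul
          (measAux hφ measurable_snd measurable_const)).mul hG2m).aemeasurable
    _ = ∫⁻ p, (∫⁻ y, (φ p.1 y * φ p.2 y) * G2 p.1 p.2 ∂ν) ∂(μ.prod μ) := by
        refine (lintegral_lintegral_swap ?_).symm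
        exact (((measAux hφ (measurable_fst.comp measurable_fst) measurable_snd).mul
          (measAux hφ (measurable_snd.comp measurable_fst) measurable_snd)).mul
          (hG2m.comp measurable_fst)).aemeasurable
    _ = ∫⁻ p, (∫⁻ y, φ p.1 y * φ p.2 y ∂ν) ^ 2 ∂(μ.prod μ) := by
        refine lintegral_congr fun p => ?_
        rw [lintegral_mul_const _ (hinner2 p), hG2, sq]

lemma abs4Lem (a b c d : ℝ) : |a - b - c + d| ≤ |a| + |b| + |c| + |d| := by
  calc |a - b - c + d| ≤ |a - b - c| + |d| := abs_add_le _ _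
    _ ≤ (|a - b| + |c|) + |d| := by gcongr; exact abs_sub _ _
    _ ≤ (|a| + |b| + |c|) + |d| := by gcongr; exact abs_sub _ _
    _ = |a| + |b| + |c| + |d| := by ring

/-- Second localization lemma: for measures `μ` on `X` and `ν` on `Y` whose product
`λ_Z := μ ⊗ ν` is a probability measure on `Z = X × Y`, finite measurable partitions
`(A i)` of `X` and `(B j)` of `Y` with positive masses, a measurable `h : Z → ℝ` and
`σ > 0`, the fourth power of `(λ_Z ⊗ λ_Z)` of the set where the mixed difference of `h`
is at most `σ` is bounded by the localized sums over the rectangles `Z_{i,j} = A i × B j`. -/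
theorem stmt_3 {X Y : Type*} [MeasurableSpace X] [MeasurableSpace Y]
    (μ : Measure X) (ν : Measure Y) [IsProbabilityMeasure (μ.prod ν)]
    {I J : Type*} [Fintype I] [Fintype J]
    (A : I → Set X) (B : J → Set Y)
    (hAmeas : ∀ i, MeasurableSet (A i)) (hBmeas : ∀ j, MeasurableSet (B j))
    (hAdisj : Pairwise (Function.onFun Disjoint A))
    (hBdisj : Pairwise (Function.onFun Disjoint B))
    (hAcover : (⋃ i, A i) = Set.univ) (hBcover : (⋃ j, B j) = Set.univ)
    (hApos : ∀ i, 0 < μ (A i)) (hBpos : ∀ j, 0 < ν (B j))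
    (h : X × Y → ℝ) (hh : Measurable h) (σ : ℝ) (hσ : 0 < σ) :
    (((μ.prod ν).prod (μ.prod ν))
        {w : (X × Y) × (X × Y) |
          |h w.1 - h (w.2.1, w.1.2) - h (w.1.1, w.2.2) + h w.2| ≤ σ}) ^ 4 ≤
      ∑ i : I, ∑ j : J, ((μ.prod ν) (A i ×ˢ B j))⁻¹ *
        ((μ.prod ν).prod (μ.prod ν))
          (((A i ×ˢ B j) ×ˢ (A i ×ˢ B j)) ∩
            {w : (X × Y) × (X × Y) |
              |h w.1 - h (w.2.1, w.1.2) - h (w.1.1, w.2.2) + h w.2| ≤ 4 * σ}) := by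
  classical
  obtain ⟨hfinμ, hfinν⟩ := finLem μ ν
  haveI := hfinμ
  haveI := hfinν
  have hΔ : Measurable fun w : (X × Y) × (X × Y) =>
      h w.1 - h (w.2.1, w.1.2) - h (w.1.1, w.2.2) + h w.2 :=
    (((hh.comp measurable_fst).sub
      (hh.comp ((measurable_fst.comp measurable_snd).prodMk
        (measurable_snd.comp measurable_fst)))).sub
      (hh.comp ((measurable_fst.comp measurable_fst).prodMk
        (measurable_snd.comp measurable_snd)))).add
      (hh.comp measurable_snd)
  set E1 : Set ((X × Y) × (X × Y)) :=
    {w : (X × Y) × (X × Y) |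
      |h w.1 - h (w.2.1, w.1.2) - h (w.1.1, w.2.2) + h w.2| ≤ σ} with hE1def
  set E4 : Set ((X × Y) × (X × Y)) :=
    {w : (X × Y) × (X × Y) |
      |h w.1 - h (w.2.1, w.1.2) - h (w.1.1, w.2.2) + h w.2| ≤ 4 * σ} with hE4def
  have hE1m : MeasurableSet E1 := measurableSet_le hΔ.abs measurable_const
  have hE4m : MeasurableSet E4 := measurableSet_le hΔ.abs measurable_const
  have hE1symm : ∀ z z' : X × Y, (z, z') ∈ E1 ↔ (z', z) ∈ E1 := by
    intro z z'
    simp only [hE1def, Set.mem_setOf_eq]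
    rw [show h z - h (z'.1, z.2) - h (z.1, z'.2) + h z'
      = h z' - h (z.1, z'.2) - h (z'.1, z.2) + h z from by ring]
  -- the localized sets
  set G : I → J → Set ((X × Y) × (X × Y)) :=
    fun i j => ((A i ×ˢ B j) ×ˢ (Set.univ : Set (X × Y))) ∩ E1 with hGdef
  have hGm : ∀ i j, MeasurableSet (G i j) :=
    fun i j => (((hAmeas i).prod (hBmeas j)).prod MeasurableSet.univ).inter hE1m
  have hGmem : ∀ i j (q : (X × Y) × (X × Y)),
      q ∈ G i j ↔ (q.1.1 ∈ A i ∧ q.1.2 ∈ B j) ∧ q ∈ E1 := by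
    intro i j q
    simp only [hGdef, Set.mem_inter_iff, Set.mem_prod, Set.mem_univ, and_true]
  have hgm : ∀ i j, Measurable fun q : (X × Y) × (X × Y) =>
      (G i j).indicator (1 : (X × Y) × (X × Y) → ℝ≥0∞) q :=
    fun i j => measurable_const.indicator (hGm i j)
  set g : I → J → (X × Y) → (X × Y) → ℝ≥0∞ :=
    fun i j uv z => (G i j).indicator 1 (z, uv) with hgdef
  set f : (X × Y) → (X × Y) → ℝ≥0∞ := fun z uv => E1.indicator 1 (z, uv) with hfdef
  set P : (X × Y) → ℝ≥0∞ := fun uv => ∫⁻ z, f z uv ∂(μ.prod ν) with hPdef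
  have hPmeas : Measurable P := by
    simp only [hPdef, hfdef]
    have hm : Measurable fun q : (X × Y) × (X × Y) =>
        E1.indicator (1 : (X × Y) × (X × Y) → ℝ≥0∞) (q.2, q.1) :=
      (measurable_const.indicator hE1m).comp (measurable_snd.prodMk measurable_fst)
    exact hm.lintegral_prod_right'
  -- Step 1 : the measure of E1 as an integral
  have hstep1 : ((μ.prod ν).prod (μ.prod ν)) E1 = ∫⁻ uv, P uv ∂(μ.prod ν) := by
    rw [Measure.prod_apply hE1m]
    refine lintegral_congr fun z => ?_
    rw [← lintegral_indicator_one (measurable_prodMk_left hE1m)]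
    simp only [hPdef, hfdef]
    refine lintegral_congr fun z' => ?_
    by_cases hzz : (z, z') ∈ E1
    · rw [Set.indicator_of_mem (Set.mem_preimage.mpr hzz),
        Set.indicator_of_mem ((hE1symm z z').mp hzz)]
      rfl
    · rw [Set.indicator_of_notMem (fun hc => hzz (Set.mem_preimage.mp hc)),
        Set.indicator_of_notMem (fun hc => hzz ((hE1symm z z').mpr hc))]
  -- Step 2 : Jensen
  have hstep2 : ((μ.prod ν).prod (μ.prod ν)) E1 ^ 4 ≤ ∫⁻ uv, P uv ^ 4 ∂(μ.prod ν) := by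
    rw [hstep1]; exact pow4Lem _ P hPmeas.aemeasurable
  -- the localized four-point integral
  set Q : I → J → (X × Y) → ℝ≥0∞ := fun i j uv =>
    ∫⁻ w, g i j uv w.1 * g i j uv (w.2.1, w.1.2) * g i j uv (w.1.1, w.2.2) * g i j uv w.2
      ∂((μ.prod ν).prod (μ.prod ν)) with hQdef
  have hKm : ∀ i j, Measurable fun q : (X × Y) × ((X × Y) × (X × Y)) =>
      g i j q.1 q.2.1 * g i j q.1 (q.2.2.1, q.2.1.2) * g i j q.1 (q.2.1.1, q.2.2.2) *
        g i j q.1 q.2.2 := by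
    intro i j
    simp only [hgdef]
    refine Measurable.mul (Measurable.mul (Measurable.mul ?_ ?_) ?_) ?_
    · exact (hgm i j).comp ((measurable_fst.comp measurable_snd).prodMk measurable_fst)
    · exact (hgm i j).comp (((measurable_fst.comp (measurable_snd.comp measurable_snd)).prodMk
        (measurable_snd.comp (measurable_fst.comp measurable_snd))).prodMk measurable_fst)
    · exact (hgm i j).comp (((measurable_fst.comp (measurable_fst.comp measurable_snd)).prodMk
        (measurable_snd.comp (measurable_snd.comp measurable_snd))).prodMk measurable_fst)
    · exact (hgm i j).comp ((measurable_snd.comp measurable_snd).prodMk measurable_fst)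
  have hQmeas : ∀ i j, Measurable (Q i j) := by
    intro i j
    simp only [hQdef]
    exact (hKm i j).lintegral_prod_right'
  -- Step 4 : the localized integral is bounded by the localized measure
  have hstep4 : ∀ i j uv, Q i j uv ≤
      ((μ.prod ν).prod (μ.prod ν)) (((A i ×ˢ B j) ×ˢ (A i ×ˢ B j)) ∩ E4) := by
    intro i j uv
    have hTm : MeasurableSet (((A i ×ˢ B j) ×ˢ (A i ×ˢ B j)) ∩ E4) :=
      (((hAmeas i).prod (hBmeas j)).prod ((hAmeas i).prod (hBmeas j))).inter hE4m
    simp only [hQdef]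
    rw [← lintegral_indicator_one hTm]
    refine lintegral_mono fun w => ?_
    simp only [hgdef]
    by_cases m1 : (w.1, uv) ∈ G i j
    swap
    · rw [Set.indicator_of_notMem m1]; simp
    by_cases m2 : ((w.2.1, w.1.2), uv) ∈ G i j
    swap
    · rw [Set.indicator_of_notMem m2]; simp
    by_cases m3 : ((w.1.1, w.2.2), uv) ∈ G i j
    swap
    · rw [Set.indicator_of_notMem m3]; simp
    by_cases m4 : (w.2, uv) ∈ G i j
    swap
    · rw [Set.indicator_of_notMem m4]; simp
    obtain ⟨⟨hA1, hB1⟩, hE1w⟩ := (hGmem i j _).mp m1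
    obtain ⟨⟨hA2, hB2⟩, hE2w⟩ := (hGmem i j _).mp m2
    obtain ⟨⟨hA3, hB3⟩, hE3w⟩ := (hGmem i j _).mp m3
    obtain ⟨⟨hA4, hB4⟩, hE4w⟩ := (hGmem i j _).mp m4
    have hwT : w ∈ ((A i ×ˢ B j) ×ˢ (A i ×ˢ B j)) ∩ E4 := by
      refine ⟨⟨⟨hA1, hB1⟩, hA4, hB4⟩, ?_⟩
      simp only [hE4def, Set.mem_setOf_eq]
      simp only [hE1def, Set.mem_setOf_eq] at hE1w hE2w hE3w hE4w
      have key : h w.1 - h (w.2.1, w.1.2) - h (w.1.1, w.2.2) + h w.2 =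
          (h w.1 - h (uv.1, w.1.2) - h (w.1.1, uv.2) + h uv)
          - (h (w.2.1, w.1.2) - h (uv.1, w.1.2) - h (w.2.1, uv.2) + h uv)
          - (h (w.1.1, w.2.2) - h (uv.1, w.2.2) - h (w.1.1, uv.2) + h uv)
          + (h w.2 - h (uv.1, w.2.2) - h (w.2.1, uv.2) + h uv) := by ring
      rw [key]
      refine (abs4Lem _ _ _ _).trans ?_
      have := hE1w
      linarith [hE1w, hE2w, hE3w, hE4w]
    rw [Set.indicator_of_mem hwT, Set.indicator_of_mem m1, Set.indicator_of_mem m2,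
      Set.indicator_of_mem m3, Set.indicator_of_mem m4]
    simp
  -- pointwise decomposition of f over the partition
  have hsum_g : ∀ uv z : X × Y, (∑ i, ∑ j, g i j uv z) = f z uv := by
    intro uv z
    obtain ⟨i0, hi0⟩ := Set.mem_iUnion.mp (show z.1 ∈ ⋃ i, A i by rw [hAcover]; trivial)
    obtain ⟨j0, hj0⟩ := Set.mem_iUnion.mp (show z.2 ∈ ⋃ j, B j by rw [hBcover]; trivial)
    have huniq : ∀ i j, ((z, uv) ∈ G i j) ↔ (i = i0 ∧ j = j0 ∧ (z, uv) ∈ E1) := by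
      intro i j
      rw [hGmem]
      constructor
      · rintro ⟨⟨hA', hB'⟩, hE'⟩
        refine ⟨?_, ?_, hE'⟩
        · by_contra hne; exact Set.disjoint_left.mp (hAdisj hne) hA' hi0
        · by_contra hne; exact Set.disjoint_left.mp (hBdisj hne) hB' hj0
      · rintro ⟨rfl, rfl, hE'⟩; exact ⟨⟨hi0, hj0⟩, hE'⟩
    simp only [hgdef, hfdef, Set.indicator_apply, huniq, Pi.one_apply]
    by_cases hE : (z, uv) ∈ E1
    · simp [hE, ite_and, Finset.sum_ite_eq']
    · simp [hE]
  -- the localized single integrals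
  set S : I → J → (X × Y) → ℝ≥0∞ := fun i j uv => ∫⁻ z, g i j uv z ∂(μ.prod ν) with hSdef
  have hgzm : ∀ i j uv, Measurable fun z : X × Y => g i j uv z := by
    intro i j uv
    simp only [hgdef]
    exact (hgm i j).comp (measurable_id.prodMk measurable_const)
  have h3a : ∀ uv, P uv = ∑ i, ∑ j, S i j uv := by
    intro uv
    simp only [hPdef, hSdef]
    calc (∫⁻ z, f z uv ∂(μ.prod ν))
        = ∫⁻ z, ∑ i, ∑ j, g i j uv z ∂(μ.prod ν) :=
          lintegral_congr fun z => (hsum_g uv z).symm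
      _ = ∑ i, ∫⁻ z, ∑ j, g i j uv z ∂(μ.prod ν) :=
          lintegral_finset_sum _ (fun i _ => Finset.measurable_sum _ (fun j _ => hgzm i j uv))
      _ = ∑ i, ∑ j, ∫⁻ z, g i j uv z ∂(μ.prod ν) :=
          Finset.sum_congr rfl (fun i _ => lintegral_finset_sum _ (fun j _ => hgzm i j uv))
  -- Step 3b : box Cauchy-Schwarz
  have h3b : ∀ i j uv, S i j uv ^ 4 ≤ ((μ.prod ν) (A i ×ˢ B j)) ^ 2 * Q i j uv := by
    intro i j uv
    have hφm : Measurable (uncurry fun x y => g i j uv (x, y)) := by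
      simp only [hgdef]
      exact (hgm i j).comp ((measurable_fst.prodMk measurable_snd).prodMk measurable_const)
    have hsuppA : ∀ x y, x ∉ A i → g i j uv (x, y) = 0 := by
      intro x y hx
      simp only [hgdef]
      exact Set.indicator_of_notMem (fun hc => hx (((hGmem i j _).mp hc).1.1)) _
    have hsuppB : ∀ x y, y ∉ B j → g i j uv (x, y) = 0 := by
      intro x y hy
      simp only [hgdef]
      exact Set.indicator_of_notMem (fun hc => hy (((hGmem i j _).mp hc).1.2)) _
    have hbox := boxLem μ ν (A i) (B j) (hAmeas i) (hBmeas j) _ hφm hsuppA hsuppB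
    have hQeq : Q i j uv
        = ∫⁻ p, (∫⁻ y, g i j uv (p.1, y) * g i j uv (p.2, y) ∂ν) ^ 2 ∂(μ.prod μ) := by
      simp only [hQdef]
      exact rearrangeLem μ ν (fun x y => g i j uv (x, y)) hφm
    calc S i j uv ^ 4 = (∫⁻ z, g i j uv (z.1, z.2) ∂(μ.prod ν)) ^ 4 := rfl
      _ ≤ (μ (A i) * ν (B j)) ^ 2 *
            ∫⁻ p, (∫⁻ y, g i j uv (p.1, y) * g i j uv (p.2, y) ∂ν) ^ 2 ∂(μ.prod μ) := hbox
      _ = ((μ.prod ν) (A i ×ˢ B j)) ^ 2 * Q i j uv := by rw [hQeq, Measure.prod_prod]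
  -- sums over pairs
  have hpair : ∀ t : I → J → ℝ≥0∞, (∑ p : I × J, t p.1 p.2) = ∑ i, ∑ j, t i j := by
    intro t; rw [Fintype.sum_prod_type]
  -- Step 3 : pointwise localization
  have hstep3 : ∀ uv, P uv ^ 4 ≤ ∑ i, ∑ j, ((μ.prod ν) (A i ×ˢ B j))⁻¹ * Q i j uv := by
    intro uv
    have hw0 : ∀ p : I × J, (μ.prod ν) (A p.1 ×ˢ B p.2) ≠ 0 := by
      intro p
      rw [Measure.prod_prod]
      exact mul_ne_zero (hApos p.1).ne' (hBpos p.2).ne'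
    have hwtop : ∀ p : I × J, (μ.prod ν) (A p.1 ×ˢ B p.2) ≠ ⊤ := fun p => measure_ne_top _ _
    have hw1 : (∑ p : I × J, (μ.prod ν) (A p.1 ×ˢ B p.2)) = 1 := by
      have hdisj : Pairwise (Function.onFun Disjoint fun p : I × J => A p.1 ×ˢ B p.2) := by
        rintro p q hpq
        have hor : p.1 ≠ q.1 ∨ p.2 ≠ q.2 := by
          by_contra hc
          push_neg at hc
          exact hpq (Prod.ext hc.1 hc.2)
        rcases hor with h1 | h2
        · exact Set.disjoint_left.mpr fun z hz1 hz2 =>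
            Set.disjoint_left.mp (hAdisj h1) hz1.1 hz2.1
        · exact Set.disjoint_left.mpr fun z hz1 hz2 =>
            Set.disjoint_left.mp (hBdisj h2) hz1.2 hz2.2
      have hcov : (⋃ p : I × J, A p.1 ×ˢ B p.2) = Set.univ := by
        ext z
        simp only [Set.mem_iUnion, Set.mem_univ, iff_true]
        obtain ⟨i0, hi0⟩ := Set.mem_iUnion.mp (show z.1 ∈ ⋃ i, A i by rw [hAcover]; trivial)
        obtain ⟨j0, hj0⟩ := Set.mem_iUnion.mp (show z.2 ∈ ⋃ j, B j by rw [hBcover]; trivial)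
        exact ⟨(i0, j0), hi0, hj0⟩
      rw [← tsum_fintype (L := .unconditional _), ← measure_iUnion hdisj (fun p => (hAmeas p.1).prod (hBmeas p.2)),
        hcov, measure_univ]
    calc P uv ^ 4
        = (∑ p : I × J, (μ.prod ν) (A p.1 ×ˢ B p.2) *
            (S p.1 p.2 uv * ((μ.prod ν) (A p.1 ×ˢ B p.2))⁻¹)) ^ 4 := by
          rw [h3a uv, ← hpair (fun i j => S i j uv)]
          refine congrArg (· ^ 4) (Finset.sum_congr rfl fun p _ => ?_)
          rw [mul_comm ((μ.prod ν) (A p.1 ×ˢ B p.2)), mul_assoc,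
            ENNReal.inv_mul_cancel (hw0 p) (hwtop p), mul_one]
      _ ≤ ∑ p : I × J, (μ.prod ν) (A p.1 ×ˢ B p.2) *
            (S p.1 p.2 uv * ((μ.prod ν) (A p.1 ×ˢ B p.2))⁻¹) ^ 4 := jensenSum _ _ hw1
      _ ≤ ∑ p : I × J, ((μ.prod ν) (A p.1 ×ˢ B p.2))⁻¹ * Q p.1 p.2 uv := by
          refine Finset.sum_le_sum fun p _ => ?_
          calc (μ.prod ν) (A p.1 ×ˢ B p.2) *
                (S p.1 p.2 uv * ((μ.prod ν) (A p.1 ×ˢ B p.2))⁻¹) ^ 4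
              = S p.1 p.2 uv ^ 4 *
                ((μ.prod ν) (A p.1 ×ˢ B p.2) * ((μ.prod ν) (A p.1 ×ˢ B p.2))⁻¹ ^ 4) := by
                ring
            _ ≤ (((μ.prod ν) (A p.1 ×ˢ B p.2)) ^ 2 * Q p.1 p.2 uv) *
                ((μ.prod ν) (A p.1 ×ˢ B p.2) * ((μ.prod ν) (A p.1 ×ˢ B p.2))⁻¹ ^ 4) := by
                gcongr
                exact h3b p.1 p.2 uv
            _ = (((μ.prod ν) (A p.1 ×ˢ B p.2))⁻¹ * Q p.1 p.2 uv) *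
                ((μ.prod ν) (A p.1 ×ˢ B p.2) * ((μ.prod ν) (A p.1 ×ˢ B p.2))⁻¹) ^ 3 := by
                ring
            _ = ((μ.prod ν) (A p.1 ×ˢ B p.2))⁻¹ * Q p.1 p.2 uv := by
                rw [ENNReal.mul_inv_cancel (hw0 p) (hwtop p), one_pow, mul_one]
      _ = ∑ i, ∑ j, ((μ.prod ν) (A i ×ˢ B j))⁻¹ * Q i j uv :=
          hpair (fun i j => ((μ.prod ν) (A i ×ˢ B j))⁻¹ * Q i j uv)
  -- final assembly
  calc ((μ.prod ν).prod (μ.prod ν)) E1 ^ 4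
      ≤ ∫⁻ uv, P uv ^ 4 ∂(μ.prod ν) := hstep2
    _ ≤ ∫⁻ uv, ∑ i, ∑ j, ((μ.prod ν) (A i ×ˢ B j))⁻¹ * Q i j uv ∂(μ.prod ν) :=
        lintegral_mono fun uv => hstep3 uv
    _ = ∑ i, ∑ j, ∫⁻ uv, ((μ.prod ν) (A i ×ˢ B j))⁻¹ * Q i j uv ∂(μ.prod ν) := by
        rw [lintegral_finset_sum _ (fun i _ => Finset.measurable_sum _
          (fun j _ => (hQmeas i j).const_mul _))]
        exact Finset.sum_congr rfl fun i _ =>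
          lintegral_finset_sum _ (fun j _ => (hQmeas i j).const_mul _)
    _ ≤ ∑ i, ∑ j, ((μ.prod ν) (A i ×ˢ B j))⁻¹ *
          ((μ.prod ν).prod (μ.prod ν)) (((A i ×ˢ B j) ×ˢ (A i ×ˢ B j)) ∩ E4) := by
        refine Finset.sum_le_sum fun i _ => Finset.sum_le_sum fun j _ => ?_
        rw [lintegral_const_mul _ (hQmeas i j)]
        gcongr
        calc ∫⁻ uv, Q i j uv ∂(μ.prod ν)
            ≤ ∫⁻ _, ((μ.prod ν).prod (μ.prod ν))
                (((A i ×ˢ B j) ×ˢ (A i ×ˢ B j)) ∩ E4) ∂(μ.prod ν) :=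
              lintegral_mono fun uv => hstep4 i j uv
          _ = _ := by rw [lintegral_const, measure_univ, mul_one]
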